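/- Let f be an irreducible monic integer polynomial of degree 4 with constant term ±1, roots λ_1, λ_2, λ_3, λ_4 all of absolute value ≠ 1, satisfying λ_1^k λ_2^k = 1 and λ_3^k λ_4^k = 1 for some integer k > 0 (so the roots do not have full rank). Then the Galois group of f over ℚ contains no element of order 3; in particular its order is a power of 2. -/

import Mathlib

open Polynomial

private def pr4 : Fin 4 → Fin 4 := ![1,0,3,2]

private lemma perm4_lemma : ∀ π : Equiv.Perm (Fin 4), π ^ 3 = 1 → π ≠ 1 →
    ∃ a, π a = a ∧ π (π (pr4 a)) = pr4 (π (pr4 a)) ∧ π (pr4 (π (pr4 a))) = pr4 a := by decide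

private lemma gal_smul_rel (p : ℚ[X]) [Fact ((p.map (algebraMap ℚ ℂ)).Splits)] (σ : p.Gal) (k : ℕ)
    (x y : p.rootSet ℂ) (h : ((x : ℂ) * (y : ℂ)) ^ k = 1) :
    (((σ • x : p.rootSet ℂ) : ℂ) * ((σ • y : p.rootSet ℂ) : ℂ)) ^ k = 1 := by
  set j := IsScalarTower.toAlgHom ℚ p.SplittingField ℂ with hj
  have key : ∀ z : p.rootSet p.SplittingField, ((Polynomial.Gal.rootsEquivRoots p ℂ z : ℂ)) = j z :=
    fun z => rfl
  have hx : (x : ℂ) = j ((Polynomial.Gal.rootsEquivRoots p ℂ).symm x) := by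
    exact (congrArg Subtype.val (Equiv.apply_symm_apply _ x)).symm.trans (key _)
  have hy : (y : ℂ) = j ((Polynomial.Gal.rootsEquivRoots p ℂ).symm y) := by
    exact (congrArg Subtype.val (Equiv.apply_symm_apply _ y)).symm.trans (key _)
  have hsx : ((σ • x : p.rootSet ℂ) : ℂ)
      = j (σ (((Polynomial.Gal.rootsEquivRoots p ℂ).symm x) : p.SplittingField)) := rfl
  have hsy : ((σ • y : p.rootSet ℂ) : ℂ)
      = j (σ (((Polynomial.Gal.rootsEquivRoots p ℂ).symm y) : p.SplittingField)) := rfl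
  set rx := (((Polynomial.Gal.rootsEquivRoots p ℂ).symm x) : p.SplittingField)
  set ry := (((Polynomial.Gal.rootsEquivRoots p ℂ).symm y) : p.SplittingField)
  have h1 : (rx * ry) ^ k = 1 := by
    apply j.toRingHom.injective
    rw [map_pow, map_mul, map_one]
    rw [hx, hy] at h
    exact h
  have h2 : (σ rx * σ ry) ^ k = 1 := by
    have := congrArg σ h1
    rwa [map_pow, map_mul, map_one] at this
  rw [hsx, hsy, ← map_mul, ← map_pow, h2, map_one]

/-- Let `f` be an irreducible monic integer polynomial of degree 4 with
constant term ±1, roots `lam 0, …, lam 3` all of absolute value ≠ 1, satisfying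
`(lam 0 * lam 1)^k = 1` and `(lam 2 * lam 3)^k = 1` for some `k > 0` (so the roots do not
have full rank). Then the Galois group of `f` over ℚ contains no element of order 3;
in particular its order is a power of 2. -/
theorem stmt12 (f : Polynomial ℤ) (hf : f.Monic) (hdeg : f.natDegree = 4)
    (hirr : Irreducible (f.map (Int.castRingHom ℚ)))
    (hconst : f.coeff 0 = 1 ∨ f.coeff 0 = -1)
    (lam : Fin 4 → ℂ)
    (hroots : (f.map (Int.castRingHom ℂ)).roots = Multiset.map lam Finset.univ.val)
    (habs : ∀ i, ‖lam i‖ ≠ 1)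
    (k : ℕ) (hk : 0 < k)
    (h12 : (lam 0 * lam 1) ^ k = 1) (h34 : (lam 2 * lam 3) ^ k = 1) :
    (∀ σ : (f.map (Int.castRingHom ℚ)).Gal, orderOf σ ≠ 3) ∧
      ∃ t : ℕ, Fintype.card (f.map (Int.castRingHom ℚ)).Gal = 2 ^ t := by
  set p := f.map (Int.castRingHom ℚ) with hp
  haveI hsplits : Fact ((p.map (algebraMap ℚ ℂ)).Splits) := ⟨IsAlgClosed.splits _⟩
  have hPC : p.map (algebraMap ℚ ℂ) = f.map (Int.castRingHom ℂ) := by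
    have hcomp : (algebraMap ℚ ℂ).comp (Int.castRingHom ℚ) = Int.castRingHom ℂ :=
      RingHom.ext_int _ _
    rw [hp, map_map, hcomp]
  have hsep : p.Separable := hirr.separable
  have hnodup : (p.map (algebraMap ℚ ℂ)).roots.Nodup := nodup_roots hsep.map
  have hinj : Function.Injective lam := by
    rw [hPC, hroots] at hnodup
    intro i j hij
    exact Multiset.inj_on_of_nodup_map hnodup i (Finset.mem_val.mpr (Finset.mem_univ i)) j
      (Finset.mem_val.mpr (Finset.mem_univ j)) hij
  have hmem : ∀ z : ℂ, z ∈ p.rootSet ℂ ↔ ∃ i, lam i = z := by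
    intro z
    rw [Polynomial.rootSet, Finset.mem_coe, Multiset.mem_toFinset, Polynomial.aroots_def,
      hPC, hroots, Multiset.mem_map]
    constructor
    · rintro ⟨i, -, h⟩; exact ⟨i, h⟩
    · rintro ⟨i, h⟩; exact ⟨i, Finset.mem_val.mpr (Finset.mem_univ i), h⟩
  let e : Fin 4 ≃ p.rootSet ℂ :=
    Equiv.ofBijective (fun i => ⟨lam i, (hmem _).mpr ⟨i, rfl⟩⟩)
      ⟨fun i j h => hinj (congrArg Subtype.val h),
        fun z => by obtain ⟨i, hi⟩ := (hmem z).mp z.2; exact ⟨i, Subtype.ext hi⟩⟩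
  have hecoe : ∀ i, ((e i : ℂ)) = lam i := fun i => rfl
  have noorder3 : ∀ σ : p.Gal, orderOf σ ≠ 3 := by
    intro σ hσ
    set τ := Polynomial.Gal.galActionHom p ℂ σ with hτ
    set π : Equiv.Perm (Fin 4) := (e.trans (τ.trans e.symm)) with hπ
    have hτ3 : τ ^ 3 = 1 := by
      rw [hτ, ← map_pow, show σ ^ 3 = 1 from hσ ▸ pow_orderOf_eq_one σ, map_one]
    have hπ3 : π ^ 3 = 1 := by
      ext i
      have h3 : τ (τ (τ (e i))) = e i := by
        have := congrFun (congrArg (fun (g : Equiv.Perm (p.rootSet ℂ)) => ⇑g) hτ3) (e i)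
        simpa [pow_succ, Equiv.Perm.mul_apply] using this
      simp only [pow_succ, pow_zero, one_mul, Equiv.Perm.mul_apply, hπ, Equiv.trans_apply,
        Equiv.apply_symm_apply, Equiv.Perm.one_apply]
      rw [h3, Equiv.symm_apply_apply]
    have hπne : π ≠ 1 := by
      intro h1
      have hτ1 : τ = 1 := by
        ext x
        have := congrFun (congrArg (fun (g : Equiv.Perm (Fin 4)) => ⇑g) h1) (e.symm x)
        simp only [hπ, Equiv.trans_apply, Equiv.apply_symm_apply, Equiv.Perm.one_apply] at this
        have h2 := congrArg e this
        rw [Equiv.apply_symm_apply, Equiv.apply_symm_apply] at h2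
        rw [Equiv.Perm.one_apply, h2]
      have hσ1 : σ = 1 := Polynomial.Gal.galActionHom_injective p ℂ (by rw [← hτ, hτ1, map_one])
      rw [hσ1, orderOf_one] at hσ
      exact (by norm_num : (1 : ℕ) ≠ 3) hσ
    have hR : ∀ i j, (lam i * lam j) ^ k = 1 → (lam (π i) * lam (π j)) ^ k = 1 := by
      intro i j h
      have key := gal_smul_rel p σ k (e i) (e j) (by rw [hecoe, hecoe]; exact h)
      have hsm : ∀ i, (σ • e i : p.rootSet ℂ) = e (π i) := by
        intro i
        have : π i = e.symm (τ (e i)) := rfl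
        rw [this, Equiv.apply_symm_apply]
        rfl
      rw [hsm i, hsm j, hecoe, hecoe] at key
      exact key
    have hprv : ∀ x : Fin 4, (x = 0 ∧ pr4 x = 1) ∨ (x = 1 ∧ pr4 x = 0) ∨
        (x = 2 ∧ pr4 x = 3) ∨ (x = 3 ∧ pr4 x = 2) := by decide
    have hRpair : ∀ x : Fin 4, (lam x * lam (pr4 x)) ^ k = 1 := by
      intro x
      rcases hprv x with ⟨hx1, hx2⟩ | ⟨hx1, hx2⟩ | ⟨hx1, hx2⟩ | ⟨hx1, hx2⟩ <;> subst hx1 <;>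
          rw [hx2] <;>
        first
          | exact h12
          | exact h34
          | (rw [mul_comm]; first | exact h12 | exact h34)
    obtain ⟨a, ha, hc, hd⟩ := perm4_lemma π hπ3 hπne
    set b := pr4 a with hb
    set c := π b with hcdef
    set d := pr4 c with hddef
    have h1 : (lam a * lam b) ^ k = 1 := hRpair a
    have h2 : (lam a * lam c) ^ k = 1 := by have := hR a b h1; rwa [ha] at this
    have h3 : (lam a * lam d) ^ k = 1 := by have := hR a c h2; rwa [ha, hc] at this
    have h4 : (lam c * lam d) ^ k = 1 := hRpair c
    have h5 : (lam d * lam b) ^ k = 1 := by have := hR c d h4; rwa [hc, hd] at this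
    -- now pure algebra
    rw [mul_pow] at h1 h3 h5
    have had : lam a ^ k = lam d ^ k := by
      calc lam a ^ k = lam a ^ k * (lam d ^ k * lam b ^ k) := by rw [h5, mul_one]
        _ = lam d ^ k * (lam a ^ k * lam b ^ k) := by ring
        _ = lam d ^ k := by rw [h1, mul_one]
    have hsq : lam a ^ (2 * k) = 1 := by
      rw [two_mul, pow_add]
      calc lam a ^ k * lam a ^ k = lam a ^ k * lam d ^ k := by rw [had]
        _ = 1 := h3
    have habs1 : ‖lam a‖ ^ (2 * k) = 1 := by
      rw [← norm_pow, hsq, norm_one]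
    have hnn := norm_nonneg (lam a)
    rcases lt_trichotomy (‖lam a‖) 1 with h | h | h
    · have hlt : ‖lam a‖ ^ (2 * k) < 1 :=
        pow_lt_one₀ hnn h (Nat.mul_ne_zero two_ne_zero hk.ne')
      rw [habs1] at hlt
      exact lt_irrefl 1 hlt
    · exact habs a h
    · have hlt : 1 < ‖lam a‖ ^ (2 * k) :=
        one_lt_pow₀ h (Nat.mul_ne_zero two_ne_zero hk.ne')
      rw [habs1] at hlt
      exact lt_irrefl 1 hlt
  refine ⟨noorder3, ?_⟩
  have hcardroot : Fintype.card (p.rootSet ℂ) = 4 := by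
    rw [← Fintype.card_congr e, Fintype.card_fin]
  have hdvd : Fintype.card p.Gal ∣ 24 := by
    have h1 : Fintype.card p.Gal = Nat.card (Polynomial.Gal.galActionHom p ℂ).range := by
      rw [Nat.card_eq_fintype_card]
      exact Fintype.card_congr (MonoidHom.ofInjective
        (Polynomial.Gal.galActionHom_injective p ℂ)).toEquiv
    have h2 := Subgroup.card_subgroup_dvd_card (Polynomial.Gal.galActionHom p ℂ).range
    rw [← h1, Nat.card_eq_fintype_card, Fintype.card_perm, hcardroot] at h2
    norm_num [Nat.factorial] at h2
    exact h2
  have h3nd : ¬ (3 ∣ Fintype.card p.Gal) := by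
    intro hdvd3
    haveI : Fact (Nat.Prime 3) := ⟨by norm_num⟩
    obtain ⟨σ, hσ⟩ := exists_prime_orderOf_dvd_card 3 hdvd3
    exact noorder3 σ hσ
  obtain ⟨n, hn⟩ : ∃ n, Fintype.card p.Gal = n := ⟨_, rfl⟩
  rw [hn] at hdvd h3nd ⊢
  have hle : n ≤ 24 := Nat.le_of_dvd (by norm_num) hdvd
  interval_cases n <;>
    first
      | exact ⟨0, by decide⟩
      | exact ⟨1, by decide⟩
      | exact ⟨2, by decide⟩
      | exact ⟨3, by decide⟩
      | exact absurd hdvd (by decide)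
      | exact absurd (by decide) h3nd
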